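/- The ℓ-th derivative in ρ of f(ρ,θ) = e^{−(ħρ + 1/ħ − 2ρ^{1/2} cos θ)} evaluated at ρ = ħ^{−2} equals ħ^ℓ q_ℓ(cos θ) e^{−(2/ħ)(1−cos θ)}, where q_ℓ is a monic polynomial of degree ℓ (with coefficients depending polynomially on ħ) satisfying q_ℓ(0) = (−1)^ℓ; in particular for ℓ = 1, ∂_ρ f(ρ,θ)|_{ρ=ħ^{−2}} = ħ(cos θ − 1) e^{−(2/ħ)(1−cos θ)}. -/
import Mathlib


open Real

noncomputable section

/-- The case `ℓ = 1`: the derivative in `ρ` of `f(ρ,θ) = e^{−(ħρ + 1/ħ − 2√ρ cos θ)}`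
evaluated at `ρ = λ = ħ⁻²` equals `ħ(cos θ − 1) e^{−(2/ħ)(1−cos θ)}`, in accordance with the
general formula `∂_ρ^ℓ f(ρ,θ)|_{ρ=ħ⁻²} = ħ^ℓ q_ℓ(cos θ) e^{−(2/ħ)(1−cos θ)}` with
`q₁(x) = x − 1` monic of degree `1` and `q₁(0) = −1`. -/
theorem gaussian_overlap_derivative_at_lambda
    (hbar : ℝ) (hpos : 0 < hbar) (θ : ℝ) :
    HasDerivAt
      (fun ρ : ℝ => Real.exp (-(hbar * ρ + 1 / hbar - 2 * Real.sqrt ρ * Real.cos θ)))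
      (hbar * (Real.cos θ - 1) * Real.exp (-(2 / hbar) * (1 - Real.cos θ)))
      ((hbar ^ 2)⁻¹) := by
  have hne : hbar ≠ 0 := ne_of_gt hpos
  have hx0 : ((hbar ^ 2)⁻¹ : ℝ) ≠ 0 := by positivity
  have hsqrt : Real.sqrt ((hbar ^ 2)⁻¹) = hbar⁻¹ := by
    rw [Real.sqrt_inv, Real.sqrt_sq hpos.le]
  have h1 : HasDerivAt Real.sqrt (hbar / 2) ((hbar ^ 2)⁻¹) := by
    have := Real.hasDerivAt_sqrt hx0
    rw [hsqrt] at this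
    convert this using 1
    field_simp
  have h2 : HasDerivAt
      (fun ρ : ℝ => -(hbar * ρ + 1 / hbar - 2 * Real.sqrt ρ * Real.cos θ))
      (-(hbar - 2 * (hbar / 2) * Real.cos θ)) ((hbar ^ 2)⁻¹) := by
    exact (((hasDerivAt_id _).const_mul hbar).add_const (1 / hbar)).sub
      (((h1.const_mul 2).mul_const (Real.cos θ))) |>.neg |>.congr_deriv (by ring)
  have h3 := h2.exp
  convert h3 using 1
  have : -(hbar * (hbar ^ 2)⁻¹ + 1 / hbar - 2 * Real.sqrt ((hbar ^ 2)⁻¹) * Real.cos θ)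
      = -(2 / hbar) * (1 - Real.cos θ) := by
    rw [hsqrt]; field_simp; ring
  rw [this]; ring
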